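/- Let Φ be an irreducible root system with base {α₁,…,αₙ} and highest short root β, and let u be a vector in the fundamental Weyl cell, i.e., (u, αᵢ) ≥ 0 for all i and β*(u) ≤ 1 where β*(x) = 2(x,β)/(β,β). Then for every positive root α ∈ Φ⁺ one has 0 ≤ α*(u) ≤ 1, where α*(x) = 2(x,α)/(α,α). -/

import Mathlib

open scoped BigOperators

/-- The coroot pairing `α*(x) = 2(x,α)/(α,α)`. -/
noncomputable def coPair {V : Type*} [NormedAddCommGroup V] [InnerProductSpace ℝ V]
    (a x : V) : ℝ :=
  2 * (inner ℝ x a : ℝ) / (inner ℝ a a : ℝ)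

/-- `v` is a sum of the vectors `Δ i` with nonnegative integer coefficients. -/
def IsNNComb {V : Type*} [AddCommGroup V] [Module ℝ V] {n : ℕ}
    (Δ : Fin n → V) (v : V) : Prop :=
  ∃ c : Fin n → ℕ, v = ∑ i, (c i : ℝ) • Δ i

/-- A crystallographic, irreducible root system `Φ` with base (simple roots) `Δ`. -/
structure IsIrreducibleRootSystem {V : Type*} [NormedAddCommGroup V] [InnerProductSpace ℝ V]
    {n : ℕ} (Φ : Finset V) (Δ : Fin n → V) : Prop where
  zero_not_mem : (0 : V) ∉ Φ
  base_mem : ∀ i, Δ i ∈ Φ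
  crystallographic : ∀ a ∈ Φ, ∀ b ∈ Φ, ∃ k : ℤ, coPair a b = (k : ℝ)
  reflect_mem : ∀ a ∈ Φ, ∀ b ∈ Φ, b - coPair a b • a ∈ Φ
  base_expansion : ∀ a ∈ Φ, ∃ c : Fin n → ℤ,
    ((∀ i, 0 ≤ c i) ∨ (∀ i, c i ≤ 0)) ∧ a = ∑ i, (c i : ℝ) • Δ i
  irreducible : ∀ S ⊆ Φ, S.Nonempty →
    (∀ a ∈ S, ∀ b ∈ Φ, b ∉ S → (inner ℝ a b : ℝ) = 0) → S = Φ

/-- A positive root: a root which is a nonnegative integral combination of simple roots. -/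
def IsPositiveRoot {V : Type*} [NormedAddCommGroup V] [InnerProductSpace ℝ V] {n : ℕ}
    (Φ : Finset V) (Δ : Fin n → V) (a : V) : Prop :=
  a ∈ Φ ∧ IsNNComb Δ a

/-- `β` is the maximal (highest) short root of `Φ` w.r.t. the base `Δ`. -/
def IsMaximalShortRoot {V : Type*} [NormedAddCommGroup V] [InnerProductSpace ℝ V] {n : ℕ}
    (Φ : Finset V) (Δ : Fin n → V) (β : V) : Prop :=
  β ∈ Φ ∧ (∀ a ∈ Φ, ‖β‖ ≤ ‖a‖) ∧ ∀ a ∈ Φ, ‖a‖ = ‖β‖ → IsNNComb Δ (β - a)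

/-- `γ` is the maximal (highest) long root of `Φ` w.r.t. the base `Δ`. -/
def IsMaximalLongRoot {V : Type*} [NormedAddCommGroup V] [InnerProductSpace ℝ V] {n : ℕ}
    (Φ : Finset V) (Δ : Fin n → V) (γ : V) : Prop :=
  γ ∈ Φ ∧ (∀ a ∈ Φ, ‖a‖ ≤ ‖γ‖) ∧ ∀ a ∈ Φ, ‖a‖ = ‖γ‖ → IsNNComb Δ (γ - a)

/-- `ω` is the family of fundamental dominant weights dual to the simple coroots of `Δ`. -/
def IsFundamentalWeights {V : Type*} [NormedAddCommGroup V] [InnerProductSpace ℝ V] {n : ℕ}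
    (Δ : Fin n → V) (ω : Fin n → V) : Prop :=
  ∀ i j, coPair (Δ j) (ω i) = if i = j then 1 else 0

section Aux

variable {V : Type*} [NormedAddCommGroup V] [InnerProductSpace ℝ V] {n : ℕ}
variable {Φ : Finset V} {Δ : Fin n → V}

lemma inner_self_pos_of_mem (hΦ : IsIrreducibleRootSystem Φ Δ) {a : V} (ha : a ∈ Φ) :
    0 < (inner ℝ a a : ℝ) := by
  have hne : a ≠ 0 := fun h => hΦ.zero_not_mem (h ▸ ha)
  rw [real_inner_self_eq_norm_mul_norm]
  have : 0 < ‖a‖ := norm_pos_iff.mpr hne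
  positivity

lemma neg_mem_of_mem (hΦ : IsIrreducibleRootSystem Φ Δ) {a : V} (ha : a ∈ Φ) : -a ∈ Φ := by
  have haa := inner_self_pos_of_mem hΦ ha
  have h2 : coPair a a = 2 := by
    unfold coPair; field_simp
  have h := hΦ.reflect_mem a ha a ha
  rw [h2] at h
  have : a - (2:ℝ) • a = -a := by
    rw [two_smul]; abel
  rwa [this] at h

lemma inner_nncomb_nonneg {u v : V} (hdom : ∀ i, 0 ≤ (inner ℝ u (Δ i) : ℝ))
    (hv : IsNNComb Δ v) : 0 ≤ (inner ℝ u v : ℝ) := by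
  obtain ⟨c, rfl⟩ := hv
  rw [inner_sum]
  refine Finset.sum_nonneg fun i _ => ?_
  rw [real_inner_smul_right]
  exact mul_nonneg (by positivity) (hdom i)

lemma inner_self_eq_of_norm_eq {x y : V} (h : ‖x‖ = ‖y‖) :
    (inner ℝ x x : ℝ) = (inner ℝ y y : ℝ) := by
  rw [real_inner_self_eq_norm_mul_norm, real_inner_self_eq_norm_mul_norm, h]

/-- Key lemma: if `α` is a long root and `σ` a short root with `(α,σ) > 0`, then
`α - σ` is a short root, `2(α,σ) = (α,α)`, and `(α,α) ≥ 2(β,β)`. -/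
lemma long_decomp (hΦ : IsIrreducibleRootSystem Φ Δ) {β α σ : V}
    (hβ : IsMaximalShortRoot Φ Δ β) (hα : α ∈ Φ) (hσ : σ ∈ Φ)
    (hσs : ‖σ‖ = ‖β‖) (hlong : ‖β‖ < ‖α‖) (hpos : 0 < (inner ℝ α σ : ℝ)) :
    α - σ ∈ Φ ∧ ‖α - σ‖ = ‖β‖ ∧ 2 * (inner ℝ α σ : ℝ) = (inner ℝ α α : ℝ) ∧
      2 * (inner ℝ β β : ℝ) ≤ (inner ℝ α α : ℝ) := by
  have haa := inner_self_pos_of_mem hΦ hα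
  have hσσ := inner_self_pos_of_mem hΦ hσ
  have hσβ : (inner ℝ σ σ : ℝ) = (inner ℝ β β : ℝ) := inner_self_eq_of_norm_eq hσs
  have hσα : ‖σ‖ < ‖α‖ := hσs ▸ hlong
  have hltn : (inner ℝ σ σ : ℝ) < (inner ℝ α α : ℝ) := by
    rw [real_inner_self_eq_norm_mul_norm, real_inner_self_eq_norm_mul_norm]
    exact mul_self_lt_mul_self (norm_nonneg _) hσα
  have hcomm : (inner ℝ σ α : ℝ) = (inner ℝ α σ : ℝ) := real_inner_comm α σ
  -- the Cartan integer k₂ = ⟨σ, α∨⟩ equals 1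
  obtain ⟨k₂, hk₂⟩ := hΦ.crystallographic α hα σ hσ
  unfold coPair at hk₂
  have hk₂pos : (0:ℝ) < (k₂ : ℝ) := by
    rw [← hk₂]
    apply div_pos _ haa
    rw [hcomm]; linarith
  have hCS : (inner ℝ α σ : ℝ) ≤ ‖α‖ * ‖σ‖ := real_inner_le_norm α σ
  have hk₂lt : (k₂ : ℝ) < 2 := by
    rw [← hk₂, div_lt_iff₀ haa]
    have h1 : ‖α‖ * ‖σ‖ < ‖α‖ * ‖α‖ := by
      apply mul_lt_mul_of_pos_left hσα
      linarith [norm_nonneg σ, hσα]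
    have h2 : (inner ℝ α α : ℝ) = ‖α‖ * ‖α‖ := real_inner_self_eq_norm_mul_norm α
    rw [hcomm]
    nlinarith
  have hk₂1 : k₂ = 1 := by
    have h1 : 0 < k₂ := by exact_mod_cast hk₂pos
    have h2 : k₂ < 2 := by exact_mod_cast hk₂lt
    omega
  rw [hk₂1] at hk₂
  have hhalf : 2 * (inner ℝ α σ : ℝ) = (inner ℝ α α : ℝ) := by
    have := hk₂
    field_simp at this
    rw [hcomm] at this
    push_cast at this
    linarith
  -- α - σ ∈ Φ
  have hrefl := hΦ.reflect_mem α hα σ hσ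
  unfold coPair at hrefl
  rw [hk₂] at hrefl
  push_cast at hrefl
  rw [one_smul] at hrefl
  have hmem : α - σ ∈ Φ := by
    have := neg_mem_of_mem hΦ hrefl
    rwa [neg_sub] at this
  -- ‖α - σ‖ = ‖β‖
  have hnormsq : (inner ℝ (α - σ) (α - σ) : ℝ) = (inner ℝ σ σ : ℝ) := by
    rw [inner_sub_sub_self]
    linarith
  have hnorm : ‖α - σ‖ = ‖β‖ := by
    rw [real_inner_self_eq_norm_mul_norm, real_inner_self_eq_norm_mul_norm] at hnormsq
    rw [← hσs]
    nlinarith [norm_nonneg (α - σ), norm_nonneg σ]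
  -- (α,α) ≥ 2 (β,β)
  obtain ⟨k₁, hk₁⟩ := hΦ.crystallographic σ hσ α hα
  unfold coPair at hk₁
  have hk₁val : (k₁ : ℝ) * (inner ℝ σ σ : ℝ) = (inner ℝ α α : ℝ) := by
    rw [div_eq_iff (ne_of_gt hσσ)] at hk₁
    linarith
  have hk₁gt : (1:ℝ) < (k₁ : ℝ) := by
    by_contra h
    push_neg at h
    nlinarith
  have hk₁2 : (2:ℝ) ≤ (k₁ : ℝ) := by
    have : (1:ℤ) < k₁ := by exact_mod_cast hk₁gt
    exact_mod_cast this
  refine ⟨hmem, hnorm, hhalf, ?_⟩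
  rw [← hσβ]
  nlinarith

/-- Every root has a short root not orthogonal to it (by irreducibility). -/
lemma exists_short_neighbor (hΦ : IsIrreducibleRootSystem Φ Δ) {β : V}
    (hβ : IsMaximalShortRoot Φ Δ β) {α : V} (hα : α ∈ Φ) :
    ∃ σ ∈ Φ, ‖σ‖ = ‖β‖ ∧ (inner ℝ α σ : ℝ) ≠ 0 := by
  classical
  set S := Φ.filter (fun b => ∃ σ ∈ Φ, ‖σ‖ = ‖β‖ ∧ (inner ℝ b σ : ℝ) ≠ 0) with hSdef
  have hsub : S ⊆ Φ := Finset.filter_subset _ _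
  have hβS : β ∈ S :=
    Finset.mem_filter.mpr ⟨hβ.1, β, hβ.1, rfl, ne_of_gt (inner_self_pos_of_mem hΦ hβ.1)⟩
  have horth : ∀ a ∈ S, ∀ b ∈ Φ, b ∉ S → (inner ℝ a b : ℝ) = 0 := by
    intro a haS b hbΦ hbS
    obtain ⟨haΦ, σ₀, hσ₀Φ, hσ₀s, hσ₀ne⟩ := Finset.mem_filter.mp haS
    have hb' : ∀ σ ∈ Φ, ‖σ‖ = ‖β‖ → (inner ℝ b σ : ℝ) = 0 := by
      intro σ hσ hσs
      by_contra hne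
      exact hbS (Finset.mem_filter.mpr ⟨hbΦ, σ, hσ, hσs, hne⟩)
    by_cases hshort : ‖a‖ = ‖β‖
    · rw [real_inner_comm]
      exact hb' a haΦ hshort
    · have hlong : ‖β‖ < ‖a‖ := lt_of_le_of_ne (hβ.2.1 a haΦ) (Ne.symm hshort)
      -- get a short root with strictly positive inner product with a
      obtain ⟨σ₁, hσ₁Φ, hσ₁s, hσ₁pos⟩ :
          ∃ σ₁ ∈ Φ, ‖σ₁‖ = ‖β‖ ∧ 0 < (inner ℝ a σ₁ : ℝ) := by
        rcases lt_or_gt_of_ne hσ₀ne with h | h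
        · refine ⟨-σ₀, neg_mem_of_mem hΦ hσ₀Φ, by rw [norm_neg]; exact hσ₀s, ?_⟩
          rw [inner_neg_right]; linarith
        · exact ⟨σ₀, hσ₀Φ, hσ₀s, h⟩
      obtain ⟨hmem, hns, -, -⟩ := long_decomp hΦ hβ haΦ hσ₁Φ hσ₁s hlong hσ₁pos
      have hsplit : (inner ℝ a b : ℝ) = (inner ℝ σ₁ b : ℝ) + (inner ℝ (a - σ₁) b : ℝ) := by
        rw [← inner_add_left]
        congr 1
        abel
      rw [hsplit, real_inner_comm b σ₁, real_inner_comm b (a - σ₁),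
        hb' σ₁ hσ₁Φ hσ₁s, hb' (a - σ₁) hmem hns]
      ring
  have hSeq : S = Φ := hΦ.irreducible S hsub ⟨β, hβS⟩ horth
  have : α ∈ S := hSeq ▸ hα
  obtain ⟨-, σ, hσ, hσs, hne⟩ := Finset.mem_filter.mp this
  exact ⟨σ, hσ, hσs, hne⟩

end Aux

/-- If `u` lies in the fundamental Weyl cell, i.e. `(u, αᵢ) ≥ 0` for every
simple root and `β*(u) ≤ 1` for the maximal short root `β`, then `0 ≤ α*(u) ≤ 1` for every
positive root `α`. -/
theorem coPair_mem_unit_interval_of_mem_cell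
    {V : Type*} [NormedAddCommGroup V] [InnerProductSpace ℝ V] {n : ℕ}
    (Φ : Finset V) (Δ : Fin n → V) (hΦ : IsIrreducibleRootSystem Φ Δ)
    (β : V) (hβ : IsMaximalShortRoot Φ Δ β)
    (u : V) (hdom : ∀ i, 0 ≤ (inner ℝ u (Δ i) : ℝ)) (hcell : coPair β u ≤ 1) :
    ∀ a : V, IsPositiveRoot Φ Δ a → 0 ≤ coPair a u ∧ coPair a u ≤ 1 := by
  intro a ha
  obtain ⟨haΦ, hacomb⟩ := ha
  have haa := inner_self_pos_of_mem hΦ haΦ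
  have hββ := inner_self_pos_of_mem hΦ hβ.1
  have hnn : 0 ≤ (inner ℝ u a : ℝ) := inner_nncomb_nonneg hdom hacomb
  -- inner products with short roots are bounded by (u, β)
  have hshort_le : ∀ σ ∈ Φ, ‖σ‖ = ‖β‖ → (inner ℝ u σ : ℝ) ≤ (inner ℝ u β : ℝ) := by
    intro σ hσ hσs
    have h := inner_nncomb_nonneg hdom (hβ.2.2 σ hσ hσs)
    rw [inner_sub_right] at h
    linarith
  have hub : 0 ≤ (inner ℝ u β : ℝ) := by
    have h := hshort_le (-β) (neg_mem_of_mem hΦ hβ.1) (norm_neg β)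
    rw [inner_neg_right] at h
    linarith
  -- from the cell condition: 2 (u,β) ≤ (β,β)
  have hcell' : 2 * (inner ℝ u β : ℝ) ≤ (inner ℝ β β : ℝ) := by
    unfold coPair at hcell
    rw [div_le_one hββ] at hcell
    exact hcell
  constructor
  · unfold coPair
    apply div_nonneg _ (le_of_lt haa)
    linarith
  · -- it suffices to show 2 (u,a) ≤ (a,a)
    have key : 2 * (inner ℝ u a : ℝ) ≤ (inner ℝ a a : ℝ) := by
      by_cases hs : ‖a‖ = ‖β‖
      · have h1 : (inner ℝ u a : ℝ) ≤ (inner ℝ u β : ℝ) := hshort_le a haΦ hs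
        have h2 : (inner ℝ a a : ℝ) = (inner ℝ β β : ℝ) := inner_self_eq_of_norm_eq hs
        linarith
      · have hlong : ‖β‖ < ‖a‖ := lt_of_le_of_ne (hβ.2.1 a haΦ) (Ne.symm hs)
        obtain ⟨σ₀, hσ₀Φ, hσ₀s, hσ₀ne⟩ := exists_short_neighbor hΦ hβ haΦ
        obtain ⟨σ₁, hσ₁Φ, hσ₁s, hσ₁pos⟩ :
            ∃ σ₁ ∈ Φ, ‖σ₁‖ = ‖β‖ ∧ 0 < (inner ℝ a σ₁ : ℝ) := by
          rcases lt_or_gt_of_ne hσ₀ne with h | h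
          · refine ⟨-σ₀, neg_mem_of_mem hΦ hσ₀Φ, by rw [norm_neg]; exact hσ₀s, ?_⟩
            rw [inner_neg_right]; linarith
          · exact ⟨σ₀, hσ₀Φ, hσ₀s, h⟩
        obtain ⟨hmem, hns, -, h2β⟩ := long_decomp hΦ hβ haΦ hσ₁Φ hσ₁s hlong hσ₁pos
        have hsplit : (inner ℝ u a : ℝ) = (inner ℝ u σ₁ : ℝ) + (inner ℝ u (a - σ₁) : ℝ) := by
          rw [← inner_add_right]
          congr 1
          abel
        have h1 : (inner ℝ u σ₁ : ℝ) ≤ (inner ℝ u β : ℝ) := hshort_le σ₁ hσ₁Φ hσ₁s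
        have h2 : (inner ℝ u (a - σ₁) : ℝ) ≤ (inner ℝ u β : ℝ) := hshort_le _ hmem hns
        linarith
    unfold coPair
    rw [div_le_one haa]
    exact key
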